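/- Let X be a Gaussian random vector in ℝ^M with mean m ≠ 0 and covariance μΔ, with Δ symmetric positive semidefinite and μ > 0. Then for any threshold τ with 0 < τ < ‖m‖², P(‖X‖² < τ) ≤ C e^{-c/μ} for some constants C, c > 0 independent of μ. -/

import Mathlib

open MeasureTheory Matrix ProbabilityTheory


open Real in
lemma gauss_abs_tail (t : ℝ) (ht : 0 ≤ t) :
    gaussianReal 0 1 {x | t ≤ |x|} ≤ ENNReal.ofReal (2 * Real.exp (-t ^ 2 / 4)) := by
  set h : ℝ → ℝ := fun x => Real.exp (-t ^ 2 / 4) * ((Real.sqrt (2 * π))⁻¹ * Real.exp (-(1/4) * x ^ 2)) with hh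
  have hint : Integrable h := by
    exact ((integrable_exp_neg_mul_sq (by norm_num : (0:ℝ) < 1/4)).const_mul _).const_mul _
  have hnn : 0 ≤ h := fun x => by positivity
  rw [gaussianReal_apply 0 (by norm_num) _]
  calc ∫⁻ x in {x | t ≤ |x|}, gaussianPDF 0 1 x
      ≤ ∫⁻ x in {x | t ≤ |x|}, ENNReal.ofReal (h x) := by
        apply setLIntegral_mono (by fun_prop) (fun x hx => ?_)
        rw [gaussianPDF]
        apply ENNReal.ofReal_le_ofReal
        rw [gaussianPDFReal]
        simp only [NNReal.coe_one, mul_one, sub_zero, hh]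
        have hx' : t ≤ |x| := hx
        have hx2 : t ^ 2 ≤ x ^ 2 := by
          have := sq_abs x
          nlinarith [hx', ht, abs_nonneg x]
        have key : Real.exp (-x ^ 2 / 2) ≤ Real.exp (-t ^ 2 / 4) * Real.exp (-(1/4) * x ^ 2) := by
          rw [← Real.exp_add]
          apply Real.exp_le_exp.2
          nlinarith
        calc (Real.sqrt (2 * π))⁻¹ * Real.exp (-x ^ 2 / 2)
            ≤ (Real.sqrt (2 * π))⁻¹ * (Real.exp (-t ^ 2 / 4) * Real.exp (-(1/4) * x ^ 2)) := by
              apply mul_le_mul_of_nonneg_left key (by positivity)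
          _ = Real.exp (-t ^ 2 / 4) * ((Real.sqrt (2 * π))⁻¹ * Real.exp (-(1/4) * x ^ 2)) := by ring
    _ ≤ ∫⁻ x, ENNReal.ofReal (h x) := setLIntegral_le_lintegral _ _
    _ = ENNReal.ofReal (∫ x, h x) :=
        (ofReal_integral_eq_lintegral_ofReal hint (Filter.Eventually.of_forall hnn)).symm
    _ ≤ ENNReal.ofReal (2 * Real.exp (-t ^ 2 / 4)) := by
        apply ENNReal.ofReal_le_ofReal
        rw [hh]
        simp only [integral_const_mul]
        rw [integral_gaussian]
        have hπ : 0 < π := Real.pi_pos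
        have h1 : Real.sqrt (π / (1/4)) = Real.sqrt (4 * π) := by norm_num; ring_nf
        rw [h1]
        have h2 : (Real.sqrt (2 * π))⁻¹ * Real.sqrt (4 * π) ≤ 2 := by
          rw [inv_mul_le_iff₀ (by positivity)]
          have h4 : Real.sqrt 4 = 2 := by
            rw [show (4:ℝ) = 2 ^ 2 by norm_num, Real.sqrt_sq (by norm_num : (0:ℝ) ≤ 2)]
          have h5 : Real.sqrt (4 * π) ≤ Real.sqrt (4 * (2 * π)) :=
            Real.sqrt_le_sqrt (by nlinarith)
          rw [Real.sqrt_mul (by norm_num) (2 * π), h4] at h5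
          linarith
        calc Real.exp (-t^2/4) * ((Real.sqrt (2*π))⁻¹ * Real.sqrt (4*π))
            ≤ Real.exp (-t^2/4) * 2 := mul_le_mul_of_nonneg_left h2 (by positivity)
          _ = 2 * Real.exp (-t^2/4) := mul_comm _ _

/-- Misdetection bound: if `X ~ N(m, μ Δ)` in `ℝ^M` with `m ≠ 0` (realized as
`X = m + √μ · A Z` with `Z` a standard Gaussian vector and `Δ = A Aᵀ`), then for any
threshold `τ` with `0 < τ < ‖m‖²` there are constants `C, c > 0`, independent of `μ`,
such that `P(‖X‖² < τ) ≤ C e^{-c/μ}` for all `μ > 0`. -/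
theorem stmt6 {M : ℕ} {Ω : Type*} [MeasurableSpace Ω] (P : Measure Ω)
    [IsProbabilityMeasure P]
    (Z : Ω → (Fin M → ℝ))
    (hZmeas : ∀ j, Measurable fun ω => Z ω j)
    (hZlaw : ∀ j, Measure.map (fun ω => Z ω j) P = gaussianReal 0 1)
    (hZindep : iIndepFun (fun j ω => Z ω j) P)
    (A Δ : Matrix (Fin M) (Fin M) ℝ) (hΔ : Δ = A * Aᵀ)
    (m : Fin M → ℝ) (hm : m ≠ 0)
    (τ : ℝ) (hτ0 : 0 < τ) (hτ : τ < ∑ j, m j ^ 2) :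
    ∃ C > (0 : ℝ), ∃ c > (0 : ℝ), ∀ μ : ℝ, 0 < μ →
      P {ω | ∑ j, (m j + Real.sqrt μ * A.mulVec (Z ω) j) ^ 2 < τ} ≤
        ENNReal.ofReal (C * Real.exp (-c / μ)) := by
  -- basic constants
  set S : ℝ := ∑ j, m j ^ 2 with hSdef
  have hS0 : 0 < S := lt_trans hτ0 hτ
  set δ : ℝ := Real.sqrt S - Real.sqrt τ with hδdef
  have hδ : 0 < δ := by
    have := Real.sqrt_lt_sqrt hτ0.le hτ
    simpa [hδdef] using sub_pos.mpr this
  set K' : ℝ := Real.sqrt (∑ j, (∑ k, |A j k|) ^ 2) with hK'def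
  have hK'0 : 0 ≤ K' := Real.sqrt_nonneg _
  set K : ℝ := 1 + K' with hKdef
  have hK : 0 < K := by positivity
  have hK'K : K' ≤ K := by simp [hKdef]
  refine ⟨2 * M + 1, by positivity, δ ^ 2 / (4 * K ^ 2), by positivity, ?_⟩
  intro μ hμ
  have hsμ : 0 < Real.sqrt μ := Real.sqrt_pos.mpr hμ
  set t : ℝ := δ / (Real.sqrt μ * K) with htdef
  have ht0 : 0 < t := by positivity
  -- inclusion of the event in a union of coordinate tail events
  have hincl : {ω | ∑ j, (m j + Real.sqrt μ * A.mulVec (Z ω) j) ^ 2 < τ} ⊆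
      ⋃ k : Fin M, {ω | t ≤ |Z ω k|} := by
    intro ω hω
    simp only [Set.mem_setOf_eq] at hω
    by_contra hc
    simp only [Set.mem_iUnion, Set.mem_setOf_eq, not_exists, not_le] at hc
    set z : Fin M → ℝ := Z ω with hzdef
    set w : Fin M → ℝ := A.mulVec z with hwdef
    set u : EuclideanSpace ℝ (Fin M) := (WithLp.equiv 2 _).symm m with hudef
    set v : EuclideanSpace ℝ (Fin M) :=
      (WithLp.equiv 2 _).symm (fun j => Real.sqrt μ * w j) with hvdef
    have huv : ‖u + v‖ < Real.sqrt τ := by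
      have : ‖u + v‖ = Real.sqrt (∑ j, (m j + Real.sqrt μ * w j) ^ 2) := by
        rw [EuclideanSpace.norm_eq]
        congr 1
        refine Finset.sum_congr rfl fun j _ => ?_
        simp [hudef, hvdef, Real.norm_eq_abs, sq_abs]
      rw [this]
      exact Real.sqrt_lt_sqrt (Finset.sum_nonneg fun j _ => sq_nonneg _) hω
    have hu : ‖u‖ = Real.sqrt S := by
      rw [EuclideanSpace.norm_eq]
      congr 1
      exact Finset.sum_congr rfl fun j _ => by simp [hudef, Real.norm_eq_abs, sq_abs]
    have hwj : ∀ j, |w j| ≤ (∑ k, |A j k|) * t := by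
      intro j
      have : w j = ∑ k, A j k * z k := rfl
      rw [this]
      calc |∑ k, A j k * z k| ≤ ∑ k, |A j k * z k| := Finset.abs_sum_le_sum_abs _ _
        _ = ∑ k, |A j k| * |z k| := by simp [abs_mul]
        _ ≤ ∑ k, |A j k| * t := Finset.sum_le_sum fun k _ =>
            mul_le_mul_of_nonneg_left (hc k).le (abs_nonneg _)
        _ = (∑ k, |A j k|) * t := (Finset.sum_mul _ _ _).symm
    have hv : ‖v‖ ≤ Real.sqrt μ * t * K' := by
      have hnorm : ‖v‖ = Real.sqrt (∑ j, (Real.sqrt μ * w j) ^ 2) := by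
        rw [EuclideanSpace.norm_eq]
        congr 1
        exact Finset.sum_congr rfl fun j _ => by simp [hvdef, Real.norm_eq_abs, abs_mul, abs_of_nonneg (Real.sqrt_nonneg μ), mul_pow, sq_abs]
      rw [hnorm]
      have hsum : ∑ j, (Real.sqrt μ * w j) ^ 2 ≤
          μ * t ^ 2 * ∑ j, (∑ k, |A j k|) ^ 2 := by
        rw [Finset.mul_sum]
        refine Finset.sum_le_sum fun j _ => ?_
        have h1 : (w j) ^ 2 ≤ ((∑ k, |A j k|) * t) ^ 2 := by
          rw [← sq_abs (w j)]
          exact pow_le_pow_left₀ (abs_nonneg _) (hwj j) 2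
        have hμs : Real.sqrt μ ^ 2 = μ := Real.sq_sqrt hμ.le
        calc (Real.sqrt μ * w j) ^ 2 = Real.sqrt μ ^ 2 * (w j) ^ 2 := by ring
          _ ≤ Real.sqrt μ ^ 2 * ((∑ k, |A j k|) * t) ^ 2 := by
              exact mul_le_mul_of_nonneg_left h1 (sq_nonneg _)
          _ = μ * t ^ 2 * (∑ k, |A j k|) ^ 2 := by rw [hμs]; ring
      calc Real.sqrt (∑ j, (Real.sqrt μ * w j) ^ 2)
          ≤ Real.sqrt (μ * t ^ 2 * ∑ j, (∑ k, |A j k|) ^ 2) := Real.sqrt_le_sqrt hsum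
        _ = Real.sqrt μ * t * K' := by
            rw [hK'def]
            rw [show μ * t ^ 2 = (Real.sqrt μ * t) ^ 2 by
              rw [mul_pow, Real.sq_sqrt hμ.le]]
            rw [Real.sqrt_mul (sq_nonneg _), Real.sqrt_sq (by positivity)]
    have hvδ : ‖v‖ ≤ δ * (K' / K) := by
      have : Real.sqrt μ * t * K' = δ * (K' / K) := by
        rw [htdef]; field_simp
      linarith [hv, this.le]
    have htri : Real.sqrt S ≤ ‖u + v‖ + ‖v‖ := by
      have h := norm_add_le (u + v) (-v)
      simp only [add_neg_cancel_right, norm_neg] at h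
      rw [hu] at h; exact h
    have hK'Kle : δ * (K' / K) ≤ δ := by
      have : K' / K ≤ 1 := (div_le_one hK).mpr hK'K
      nlinarith
    have : Real.sqrt S < Real.sqrt τ + δ := by
      calc Real.sqrt S ≤ ‖u + v‖ + ‖v‖ := htri
        _ < Real.sqrt τ + δ := by
            have := le_trans hvδ hK'Kle
            linarith [huv]
    simp [hδdef] at this
  -- measure bound
  have hEk : ∀ k : Fin M, P {ω | t ≤ |Z ω k|} ≤
      ENNReal.ofReal (2 * Real.exp (-t ^ 2 / 4)) := by
    intro k
    have hset : MeasurableSet {x : ℝ | t ≤ |x|} := by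
      have : {x : ℝ | t ≤ |x|} = (fun x : ℝ => |x|) ⁻¹' Set.Ici t := rfl
      rw [this]
      exact (measurable_norm.comp measurable_id).comp measurable_id measurableSet_Ici
    have : P {ω | t ≤ |Z ω k|} = (Measure.map (fun ω => Z ω k) P) {x | t ≤ |x|} := by
      rw [Measure.map_apply (hZmeas k) hset]
      rfl
    rw [this, hZlaw k]
    exact gauss_abs_tail t ht0.le
  have ht2 : -t ^ 2 / 4 = -(δ ^ 2 / (4 * K ^ 2)) / μ := by
    rw [htdef]
    rw [div_pow, mul_pow, Real.sq_sqrt hμ.le]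
    field_simp
  calc P {ω | ∑ j, (m j + Real.sqrt μ * A.mulVec (Z ω) j) ^ 2 < τ}
      ≤ P (⋃ k : Fin M, {ω | t ≤ |Z ω k|}) := measure_mono hincl
    _ ≤ ∑' k : Fin M, P {ω | t ≤ |Z ω k|} := measure_iUnion_le _
    _ = ∑ k : Fin M, P {ω | t ≤ |Z ω k|} := tsum_fintype _
    _ ≤ ∑ k : Fin M, ENNReal.ofReal (2 * Real.exp (-t ^ 2 / 4)) :=
        Finset.sum_le_sum fun k _ => hEk k
    _ = (M : ENNReal) * ENNReal.ofReal (2 * Real.exp (-t ^ 2 / 4)) := by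
        rw [Finset.sum_const, Finset.card_univ, Fintype.card_fin, nsmul_eq_mul]
    _ ≤ ENNReal.ofReal ((2 * M + 1) * Real.exp (-(δ ^ 2 / (4 * K ^ 2)) / μ)) := by
        rw [← ht2, ← ENNReal.ofReal_natCast M, ← ENNReal.ofReal_mul (by positivity)]
        apply ENNReal.ofReal_le_ofReal
        have : (M : ℝ) * (2 * Real.exp (-t ^ 2 / 4)) =
            2 * M * Real.exp (-t ^ 2 / 4) := by ring
        rw [this]
        have he : 0 < Real.exp (-t ^ 2 / 4) := Real.exp_pos _
        nlinarith [he]
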